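/- Frozen-in (homogeneous) solutions of the linearized fluctuation relations in Clebsch form. Work in ℝ³. Let D̄, χ, λ : ℝ³ × ℝ → ℝ and ū : ℝ³ × ℝ → ℝ³ be smooth with D̄ > 0 everywhere, and set ξ := (∇χ × ∇λ)/D̄. Then: (i) div(D̄ξ) = 0 and (ξ·∇)χ = 0 identically (so the linearized density fluctuation D′ = −div(D̄ξ) and scalar fluctuation χ′ = −(ξ·∇)χ both vanish); and (ii) if in addition ∂ₜχ + (ū·∇)χ = 0, ∂ₜλ + (ū·∇)λ = 0 and ∂ₜD̄ + div(D̄ū) = 0 hold everywhere, then ξ satisfies the homogeneous u′-equation ∂ₜξ + (ū·∇)ξ − (ξ·∇)ū = 0 everywhere (so the linearized velocity fluctuation u′ also vanishes). -/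

import Mathlib

open scoped BigOperators

noncomputable section

/-- Spatial gradient of a time-dependent scalar field. -/
def grad (f : (Fin 3 → ℝ) → ℝ → ℝ) (x : Fin 3 → ℝ) (t : ℝ) : Fin 3 → ℝ :=
  fun i => fderiv ℝ (fun y => f y t) x (Pi.single i 1)

/-- Cross product on ℝ³. -/
def cross (a b : Fin 3 → ℝ) : Fin 3 → ℝ :=
  fun i => a (i + 1) * b (i + 2) - a (i + 2) * b (i + 1)


namespace ClebschAux

abbrev Pt := (Fin 3 → ℝ) × ℝ

def eS (i : Fin 3) : Pt := (Pi.single i 1, 0)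
def eT : Pt := (0, 1)

lemma smooth_dv {F : Pt → ℝ} (hF : ContDiff ℝ (⊤:ℕ∞) F) (v : Pt) :
    ContDiff ℝ (⊤:ℕ∞) (fun p => fderiv ℝ F p v) :=
  (hF.fderiv_right (m := (⊤:ℕ∞)) (by simp)).clm_apply contDiff_const

lemma diff_of_smooth {F : Pt → ℝ} (hF : ContDiff ℝ (⊤:ℕ∞) F) : Differentiable ℝ F :=
  hF.differentiable (by simp)

lemma symm_dv {F : Pt → ℝ} (hF : ContDiff ℝ (⊤:ℕ∞) F) (p v w : Pt) :
    fderiv ℝ (fun q => fderiv ℝ F q w) p v = fderiv ℝ (fun q => fderiv ℝ F q v) p w := by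
  have hd : Differentiable ℝ F := diff_of_smooth hF
  have hd2 : DifferentiableAt ℝ (fderiv ℝ F) p :=
    ((hF.fderiv_right (m := (⊤:ℕ∞)) (by simp)).differentiable (by simp)) p
  have h1 : ∀ u : Pt, fderiv ℝ (fun q => fderiv ℝ F q u) p
      = (fderiv ℝ (fderiv ℝ F) p).flip u := by
    intro u
    rw [fderiv_clm_apply hd2 (differentiableAt_const u)]
    simp
  rw [h1 v, h1 w]
  exact second_derivative_symmetric (fun y => (hd y).hasFDerivAt) hd2.hasFDerivAt v w

lemma dv_add {F G : Pt → ℝ} {p : Pt} (hF : DifferentiableAt ℝ F p)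
    (hG : DifferentiableAt ℝ G p) (v : Pt) :
    fderiv ℝ (fun q => F q + G q) p v = fderiv ℝ F p v + fderiv ℝ G p v := by
  rw [fderiv_fun_add hF hG]; rfl

lemma dv_mul {F G : Pt → ℝ} {p : Pt} (hF : DifferentiableAt ℝ F p)
    (hG : DifferentiableAt ℝ G p) (v : Pt) :
    fderiv ℝ (fun q => F q * G q) p v = F p * fderiv ℝ G p v + G p * fderiv ℝ F p v := by
  rw [fderiv_fun_mul hF hG]
  simp [smul_eq_mul]

lemma dv_sub {F G : Pt → ℝ} {p : Pt} (hF : DifferentiableAt ℝ F p)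
    (hG : DifferentiableAt ℝ G p) (v : Pt) :
    fderiv ℝ (fun q => F q - G q) p v = fderiv ℝ F p v - fderiv ℝ G p v := by
  rw [fderiv_fun_sub hF hG]; rfl

lemma dv_sum {F : Fin 3 → Pt → ℝ} {p : Pt} (hF : ∀ i, DifferentiableAt ℝ (F i) p) (v : Pt) :
    fderiv ℝ (fun q => ∑ i, F i q) p v = ∑ i, fderiv ℝ (F i) p v := by
  rw [fderiv_fun_sum (fun i _ => hF i)]
  simp

lemma dv_zero {F : Pt → ℝ} (h : ∀ q, F q = 0) (p v : Pt) : fderiv ℝ F p v = 0 := by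
  have : F = fun _ => (0:ℝ) := funext h
  rw [this, fderiv_fun_const]
  simp

lemma dv_inv {G : Pt → ℝ} {p : Pt} (hG : DifferentiableAt ℝ G p) (hGp : G p ≠ 0) (v : Pt) :
    fderiv ℝ (fun q => (G q)⁻¹) p v = -fderiv ℝ G p v / (G p)^2 := by
  have hcomp : fderiv ℝ (fun q => (G q)⁻¹) p
      = (fderiv ℝ (fun y : ℝ => y⁻¹) (G p)).comp (fderiv ℝ G p) :=
    fderiv_comp p (differentiableAt_inv hGp) hG
  rw [hcomp]
  rw [fderiv_inv]
  simp [smul_eq_mul]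
  ring

lemma dv_div {F G : Pt → ℝ} {p : Pt} (hF : DifferentiableAt ℝ F p)
    (hG : DifferentiableAt ℝ G p) (hGp : G p ≠ 0) (v : Pt) :
    fderiv ℝ (fun q => F q / G q) p v
      = (fderiv ℝ F p v * G p - F p * fderiv ℝ G p v) / (G p)^2 := by
  have h1 : (fun q => F q / G q) = fun q => F q * (G q)⁻¹ := by
    funext q; rw [div_eq_mul_inv]
  rw [h1, dv_mul (G := fun q => (G q)⁻¹) hF (hG.inv hGp) v, dv_inv hG hGp v]
  field_simp
  ring

lemma slice_fderiv {F : Pt → ℝ} {x : Fin 3 → ℝ} {t : ℝ}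
    (hF : DifferentiableAt ℝ F (x, t)) (v : Fin 3 → ℝ) :
    fderiv ℝ (fun y => F (y, t)) x v = fderiv ℝ F (x, t) (v, 0) := by
  have h1 : HasFDerivAt (fun y : Fin 3 → ℝ => (y, t))
      (ContinuousLinearMap.inl ℝ (Fin 3 → ℝ) ℝ) x := hasFDerivAt_prodMk_left x t
  have h2 := (hF.hasFDerivAt.comp x h1).fderiv
  rw [show (fun y => F (y, t)) = F ∘ (fun y => (y, t)) from rfl, h2]
  rfl

lemma slice_deriv {F : Pt → ℝ} {x : Fin 3 → ℝ} {t : ℝ}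
    (hF : DifferentiableAt ℝ F (x, t)) :
    deriv (fun s => F (x, s)) t = fderiv ℝ F (x, t) eT := by
  have h1 : HasFDerivAt (fun s : ℝ => (x, s))
      (ContinuousLinearMap.inr ℝ (Fin 3 → ℝ) ℝ) t := hasFDerivAt_prodMk_right x t
  have h2 := (hF.hasFDerivAt.comp t h1).hasDerivAt.deriv
  rw [show (fun s => F (x, s)) = F ∘ (fun s => (x, s)) from rfl]
  rw [show (F ∘ fun s => (x, s)) = F ∘ Prod.mk x from rfl, h2]
  rfl

lemma vec_decomp (v : Fin 3 → ℝ) : ((v, (0:ℝ)) : Pt) = ∑ i, v i • eS i := by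
  rw [Prod.ext_iff]
  constructor
  · rw [Prod.fst_sum]
    funext j
    simp [eS, Finset.sum_apply, Pi.single_apply, Finset.sum_ite_eq', mul_comm]
  · rw [Prod.snd_sum]
    simp [eS]

lemma fderiv_decomp {F : Pt → ℝ} (p : Pt) (v : Fin 3 → ℝ) :
    fderiv ℝ F p (v, 0) = ∑ i, v i * fderiv ℝ F p (eS i) := by
  rw [vec_decomp v, map_sum]
  simp [smul_eq_mul]



section KeyAlg
variable (A B U HS Aτ Bτ : Fin 3 → ℝ) (H Hτ : ℝ) (G AS BS : Fin 3 → Fin 3 → ℝ)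

/-- The statement of the pointwise algebraic identity, for a fixed component `i`. -/
def KeyStmt (i : Fin 3) : Prop :=
    ((Aτ (i+1) * B (i+2) + A (i+1) * Bτ (i+2)
        - (Aτ (i+2) * B (i+1) + A (i+2) * Bτ (i+1))) * H
      - (A (i+1) * B (i+2) - A (i+2) * B (i+1)) * Hτ) / H^2
    + ∑ j, U j * (((AS j (i+1) * B (i+2) + A (i+1) * BS j (i+2)
        - (AS j (i+2) * B (i+1) + A (i+2) * BS j (i+1))) * H
      - (A (i+1) * B (i+2) - A (i+2) * B (i+1)) * HS j) / H^2)
    - ∑ j, (A (j+1) * B (j+2) - A (j+2) * B (j+1)) / H * G j i = 0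

variable {A B U HS Aτ Bτ H Hτ G AS BS}

lemma key_algebra (hH : H ≠ 0)
    (hAS : ∀ j k, AS j k = AS k j) (hBS : ∀ j k, BS j k = BS k j)
    (hR1 : Hτ + ∑ j, (H * G j j + U j * HS j) = 0)
    (hR2 : ∀ k, Aτ k + ∑ j, (G k j * A j + U j * AS k j) = 0)
    (hR3 : ∀ k, Bτ k + ∑ j, (G k j * B j + U j * BS k j) = 0)
    (i : Fin 3) : KeyStmt A B U HS Aτ Bτ H Hτ G AS BS i := by
  have hHτ : Hτ = -(H * G 0 0 + U 0 * HS 0 + (H * G 1 1 + U 1 * HS 1)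
      + (H * G 2 2 + U 2 * HS 2)) := by
    have := hR1; rw [Fin.sum_univ_three] at this; linarith
  have hA : ∀ k, Aτ k = -(G k 0 * A 0 + U 0 * AS k 0 + (G k 1 * A 1 + U 1 * AS k 1)
      + (G k 2 * A 2 + U 2 * AS k 2)) := by
    intro k; have := hR2 k; rw [Fin.sum_univ_three] at this; linarith
  have hB : ∀ k, Bτ k = -(G k 0 * B 0 + U 0 * BS k 0 + (G k 1 * B 1 + U 1 * BS k 1)
      + (G k 2 * B 2 + U 2 * BS k 2)) := by
    intro k; have := hR3 k; rw [Fin.sum_univ_three] at this; linarith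
  fin_cases i
  · show KeyStmt A B U HS Aτ Bτ H Hτ G AS BS 0
    unfold KeyStmt
    rw [Fin.sum_univ_three, Fin.sum_univ_three]
    simp only [show ((0:Fin 3)+1 = 1) from rfl, show ((0:Fin 3)+2 = 2) from rfl,
      show ((1:Fin 3)+1 = 2) from rfl, show ((1:Fin 3)+2 = 0) from rfl,
      show ((2:Fin 3)+1 = 0) from rfl, show ((2:Fin 3)+2 = 1) from rfl,
      hHτ, hA, hB, hAS 1 0, hAS 2 0, hAS 2 1, hBS 1 0, hBS 2 0, hBS 2 1]
    field_simp
    ring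
  · show KeyStmt A B U HS Aτ Bτ H Hτ G AS BS 1
    unfold KeyStmt
    rw [Fin.sum_univ_three, Fin.sum_univ_three]
    simp only [show ((0:Fin 3)+1 = 1) from rfl, show ((0:Fin 3)+2 = 2) from rfl,
      show ((1:Fin 3)+1 = 2) from rfl, show ((1:Fin 3)+2 = 0) from rfl,
      show ((2:Fin 3)+1 = 0) from rfl, show ((2:Fin 3)+2 = 1) from rfl,
      hHτ, hA, hB, hAS 1 0, hAS 2 0, hAS 2 1, hBS 1 0, hBS 2 0, hBS 2 1]
    field_simp
    ring
  · show KeyStmt A B U HS Aτ Bτ H Hτ G AS BS 2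
    unfold KeyStmt
    rw [Fin.sum_univ_three, Fin.sum_univ_three]
    simp only [show ((0:Fin 3)+1 = 1) from rfl, show ((0:Fin 3)+2 = 2) from rfl,
      show ((1:Fin 3)+1 = 2) from rfl, show ((1:Fin 3)+2 = 0) from rfl,
      show ((2:Fin 3)+1 = 0) from rfl, show ((2:Fin 3)+2 = 1) from rfl,
      hHτ, hA, hB, hAS 1 0, hAS 2 0, hAS 2 1, hBS 1 0, hBS 2 0, hBS 2 1]
    field_simp
    ring
end KeyAlg

def aF (F : Pt → ℝ) (i : Fin 3) : Pt → ℝ := fun p => fderiv ℝ F p (eS i)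

lemma aF_def (F : Pt → ℝ) (i : Fin 3) : aF F i = fun p => fderiv ℝ F p (eS i) := rfl

def WF (Fc Fl : Pt → ℝ) (i : Fin 3) : Pt → ℝ :=
  fun p => aF Fc (i+1) p * aF Fl (i+2) p - aF Fc (i+2) p * aF Fl (i+1) p

def XiF (Fc Fl FD : Pt → ℝ) (i : Fin 3) : Pt → ℝ :=
  fun p => WF Fc Fl i p / FD p

section Joint
variable {Fc Fl FD : Pt → ℝ} {FU : Fin 3 → Pt → ℝ}

lemma smooth_aF (hc : ContDiff ℝ (⊤:ℕ∞) Fc) (i : Fin 3) : ContDiff ℝ (⊤:ℕ∞) (aF Fc i) :=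
  smooth_dv hc (eS i)

lemma smooth_WF (hc : ContDiff ℝ (⊤:ℕ∞) Fc) (hl : ContDiff ℝ (⊤:ℕ∞) Fl) (i : Fin 3) :
    ContDiff ℝ (⊤:ℕ∞) (WF Fc Fl i) :=
  ((smooth_aF hc (i+1)).mul (smooth_aF hl (i+2))).sub
    ((smooth_aF hc (i+2)).mul (smooth_aF hl (i+1)))

lemma smooth_XiF (hc : ContDiff ℝ (⊤:ℕ∞) Fc) (hl : ContDiff ℝ (⊤:ℕ∞) Fl)
    (hD : ContDiff ℝ (⊤:ℕ∞) FD) (hH : ∀ p, FD p ≠ 0) (i : Fin 3) :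
    ContDiff ℝ (⊤:ℕ∞) (XiF Fc Fl FD i) :=
  (smooth_WF hc hl i).div hD hH

/-- Expansion of a directional derivative of `WF`. -/
lemma dv_WF (hc : ContDiff ℝ (⊤:ℕ∞) Fc) (hl : ContDiff ℝ (⊤:ℕ∞) Fl) (i : Fin 3)
    (p v : Pt) :
    fderiv ℝ (WF Fc Fl i) p v
      = (aF Fc (i+1) p * fderiv ℝ (aF Fl (i+2)) p v
          + aF Fl (i+2) p * fderiv ℝ (aF Fc (i+1)) p v)
        - (aF Fc (i+2) p * fderiv ℝ (aF Fl (i+1)) p v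
          + aF Fl (i+1) p * fderiv ℝ (aF Fc (i+2)) p v) := by
  have h1 : DifferentiableAt ℝ (fun q => aF Fc (i+1) q * aF Fl (i+2) q) p :=
    (((smooth_aF hc (i+1)).mul (smooth_aF hl (i+2))).differentiable
      (by simp)) p
  have h2 : DifferentiableAt ℝ (fun q => aF Fc (i+2) q * aF Fl (i+1) q) p :=
    (((smooth_aF hc (i+2)).mul (smooth_aF hl (i+1))).differentiable
      (by simp)) p
  have e : WF Fc Fl i = fun q => (fun q => aF Fc (i+1) q * aF Fl (i+2) q) q
      - (fun q => aF Fc (i+2) q * aF Fl (i+1) q) q := rfl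
  rw [e, dv_sub h1 h2 v,
    dv_mul ((diff_of_smooth (smooth_aF hc (i+1))) p) ((diff_of_smooth (smooth_aF hl (i+2))) p) v,
    dv_mul ((diff_of_smooth (smooth_aF hc (i+2))) p) ((diff_of_smooth (smooth_aF hl (i+1))) p) v]

/-- Expansion of a directional derivative of `XiF`. -/
lemma dv_XiF (hc : ContDiff ℝ (⊤:ℕ∞) Fc) (hl : ContDiff ℝ (⊤:ℕ∞) Fl)
    (hD : ContDiff ℝ (⊤:ℕ∞) FD) (hH : ∀ p, FD p ≠ 0) (i : Fin 3) (p v : Pt) :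
    fderiv ℝ (XiF Fc Fl FD i) p v
      = (fderiv ℝ (WF Fc Fl i) p v * FD p - WF Fc Fl i p * fderiv ℝ FD p v) / (FD p)^2 :=
  dv_div ((diff_of_smooth (smooth_WF hc hl i)) p) ((diff_of_smooth hD) p) (hH p) v

/-- Differentiated advection relation. -/
lemma adv_deriv (hc : ContDiff ℝ (⊤:ℕ∞) Fc) (hU : ∀ j, ContDiff ℝ (⊤:ℕ∞) (FU j))
    (hadv : ∀ q, fderiv ℝ Fc q eT + ∑ j, FU j q * fderiv ℝ Fc q (eS j) = 0)
    (p : Pt) (k : Fin 3) :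
    fderiv ℝ (aF Fc k) p eT
      + ∑ j, (fderiv ℝ (FU j) p (eS k) * aF Fc j p
          + FU j p * fderiv ℝ (aF Fc j) p (eS k)) = 0 := by
  have hdsum : DifferentiableAt ℝ (fun q => ∑ j, FU j q * fderiv ℝ Fc q (eS j)) p := by
    have : ContDiff ℝ (⊤:ℕ∞) (fun q => ∑ j, FU j q * fderiv ℝ Fc q (eS j)) :=
      ContDiff.sum (fun j _ => (hU j).mul (smooth_aF hc j))
    exact (this.differentiable (by simp)) p
  have h0 : fderiv ℝ (fun q => fderiv ℝ Fc q eT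
      + ∑ j, FU j q * fderiv ℝ Fc q (eS j)) p (eS k) = 0 := dv_zero hadv p (eS k)
  rw [dv_add ((diff_of_smooth (smooth_dv hc eT)) p) hdsum (eS k)] at h0
  rw [dv_sum (F := fun j q => FU j q * fderiv ℝ Fc q (eS j))
      (fun j => ((((hU j).mul (smooth_aF hc j)).differentiable (by simp)) p))
      (eS k)] at h0
  have hmul : ∀ j, fderiv ℝ (fun q => FU j q * fderiv ℝ Fc q (eS j)) p (eS k)
      = FU j p * fderiv ℝ (aF Fc j) p (eS k) + aF Fc j p * fderiv ℝ (FU j) p (eS k) := by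
    intro j
    exact dv_mul ((diff_of_smooth (hU j)) p) ((diff_of_smooth (smooth_aF hc j)) p) (eS k)
  rw [Finset.sum_congr rfl (fun j _ => hmul j)] at h0
  have hsym : fderiv ℝ (fun q => fderiv ℝ Fc q eT) p (eS k)
      = fderiv ℝ (aF Fc k) p eT := symm_dv hc p (eS k) eT
  rw [hsym] at h0
  calc fderiv ℝ (aF Fc k) p eT
      + ∑ j, (fderiv ℝ (FU j) p (eS k) * aF Fc j p + FU j p * fderiv ℝ (aF Fc j) p (eS k))
      = fderiv ℝ (aF Fc k) p eT
        + ∑ j, (FU j p * fderiv ℝ (aF Fc j) p (eS k) + aF Fc j p * fderiv ℝ (FU j) p (eS k)) := by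
        congr 1
        exact Finset.sum_congr rfl (fun j _ => by ring)
    _ = 0 := h0

/-- The frozen-in equation at the joint level. -/
lemma frozen (hc : ContDiff ℝ (⊤:ℕ∞) Fc) (hl : ContDiff ℝ (⊤:ℕ∞) Fl)
    (hD : ContDiff ℝ (⊤:ℕ∞) FD) (hU : ∀ j, ContDiff ℝ (⊤:ℕ∞) (FU j))
    (hH : ∀ p, FD p ≠ 0)
    (hadv1 : ∀ q, fderiv ℝ Fc q eT + ∑ j, FU j q * fderiv ℝ Fc q (eS j) = 0)
    (hadv2 : ∀ q, fderiv ℝ Fl q eT + ∑ j, FU j q * fderiv ℝ Fl q (eS j) = 0)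
    (hcont : ∀ q, fderiv ℝ FD q eT
      + ∑ j, (FD q * fderiv ℝ (FU j) q (eS j) + FU j q * fderiv ℝ FD q (eS j)) = 0)
    (p : Pt) (i : Fin 3) :
    fderiv ℝ (XiF Fc Fl FD i) p eT
      + ∑ j, FU j p * fderiv ℝ (XiF Fc Fl FD i) p (eS j)
      - ∑ j, XiF Fc Fl FD j p * fderiv ℝ (FU i) p (eS j) = 0 := by
  have key := key_algebra (A := fun j => aF Fc j p) (B := fun j => aF Fl j p)
    (U := fun j => FU j p) (HS := fun j => fderiv ℝ FD p (eS j))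
    (Aτ := fun k => fderiv ℝ (aF Fc k) p eT) (Bτ := fun k => fderiv ℝ (aF Fl k) p eT)
    (H := FD p) (Hτ := fderiv ℝ FD p eT)
    (G := fun j k => fderiv ℝ (FU k) p (eS j))
    (AS := fun j k => fderiv ℝ (aF Fc k) p (eS j))
    (BS := fun j k => fderiv ℝ (aF Fl k) p (eS j))
    (hH p)
    (fun j k => symm_dv hc p (eS j) (eS k))
    (fun j k => symm_dv hl p (eS j) (eS k))
    (hcont p)
    (adv_deriv hc hU hadv1 p)
    (adv_deriv hl hU hadv2 p)
    i
  unfold KeyStmt at key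
  simp only [] at key
  rw [Fin.sum_univ_three, Fin.sum_univ_three] at key
  rw [Fin.sum_univ_three, Fin.sum_univ_three,
    dv_XiF hc hl hD hH i p eT,
    dv_XiF hc hl hD hH i p (eS 0), dv_XiF hc hl hD hH i p (eS 1),
    dv_XiF hc hl hD hH i p (eS 2),
    dv_WF hc hl i p eT, dv_WF hc hl i p (eS 0), dv_WF hc hl i p (eS 1),
    dv_WF hc hl i p (eS 2)]
  simp only [WF, XiF]
  linear_combination key

end Joint

section PartI
variable {Fc Fl FD : Pt → ℝ}

/-- `div (∇χ × ∇λ) = 0`. -/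
lemma div_free (hc : ContDiff ℝ (⊤:ℕ∞) Fc) (hl : ContDiff ℝ (⊤:ℕ∞) Fl) (p : Pt) :
    ∑ i, fderiv ℝ (WF Fc Fl i) p (eS i) = 0 := by
  rw [Fin.sum_univ_three, dv_WF hc hl 0 p (eS 0), dv_WF hc hl 1 p (eS 1),
    dv_WF hc hl 2 p (eS 2)]
  simp only [aF_def, show ((0:Fin 3)+1 = 1) from rfl, show ((0:Fin 3)+2 = 2) from rfl,
    show ((1:Fin 3)+1 = 2) from rfl, show ((1:Fin 3)+2 = 0) from rfl,
    show ((2:Fin 3)+1 = 0) from rfl, show ((2:Fin 3)+2 = 1) from rfl]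
  linear_combination
    fderiv ℝ Fl p (eS 2) * symm_dv hc p (eS 0) (eS 1)
    + fderiv ℝ Fl p (eS 1) * symm_dv hc p (eS 2) (eS 0)
    + fderiv ℝ Fl p (eS 0) * symm_dv hc p (eS 1) (eS 2)
    + fderiv ℝ Fc p (eS 1) * symm_dv hl p (eS 0) (eS 2)
    + fderiv ℝ Fc p (eS 2) * symm_dv hl p (eS 1) (eS 0)
    + fderiv ℝ Fc p (eS 0) * symm_dv hl p (eS 2) (eS 1)

/-- `ξ · ∇χ = 0`. -/
lemma ortho (p : Pt) (hH : FD p ≠ 0) :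
    ∑ i, XiF Fc Fl FD i p * fderiv ℝ Fc p (eS i) = 0 := by
  rw [Fin.sum_univ_three]
  simp only [XiF, WF, aF, show ((0:Fin 3)+1 = 1) from rfl, show ((0:Fin 3)+2 = 2) from rfl,
    show ((1:Fin 3)+1 = 2) from rfl, show ((1:Fin 3)+2 = 0) from rfl,
    show ((2:Fin 3)+1 = 0) from rfl, show ((2:Fin 3)+2 = 1) from rfl]
  field_simp
  ring

end PartI

end ClebschAux

open ClebschAux

/-- **Frozen-in (homogeneous) solutions of the linearized fluctuation relations
in Clebsch form.**  With `ξ := (∇χ × ∇λ)/D̄`: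
(i) `div(D̄ξ) = 0` and `(ξ·∇)χ = 0` identically; and
(ii) if `χ, λ` are advected scalars and `D̄` satisfies the continuity equation,
then `ξ` satisfies the homogeneous u′-equation `∂ₜξ + (ū·∇)ξ − (ξ·∇)ū = 0`. -/
theorem clebsch_frozen_in_fluctuations
    (Dbar χ lam : (Fin 3 → ℝ) → ℝ → ℝ)
    (ubar : (Fin 3 → ℝ) → ℝ → (Fin 3 → ℝ))
    -- smoothness
    (hD : ContDiff ℝ (⊤ : ℕ∞) (fun p : (Fin 3 → ℝ) × ℝ => Dbar p.1 p.2))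
    (hχ : ContDiff ℝ (⊤ : ℕ∞) (fun p : (Fin 3 → ℝ) × ℝ => χ p.1 p.2))
    (hlam : ContDiff ℝ (⊤ : ℕ∞) (fun p : (Fin 3 → ℝ) × ℝ => lam p.1 p.2))
    (hu : ContDiff ℝ (⊤ : ℕ∞) (fun p : (Fin 3 → ℝ) × ℝ => ubar p.1 p.2))
    -- positivity of the density
    (hDpos : ∀ x t, 0 < Dbar x t)
    -- ξ := (∇χ × ∇λ)/D̄
    (ξ : (Fin 3 → ℝ) → ℝ → (Fin 3 → ℝ))
    (hξdef : ∀ x t i, ξ x t i = cross (grad χ x t) (grad lam x t) i / Dbar x t) :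
    -- (i) div(D̄ξ) = 0 and (ξ·∇)χ = 0
    ((∀ x t, ∑ i, fderiv ℝ (fun y => Dbar y t * ξ y t i) x (Pi.single i 1) = 0)
      ∧ ∀ x t, fderiv ℝ (fun y => χ y t) x (ξ x t) = 0)
    -- (ii) under the advection/continuity assumptions, the homogeneous u′-equation
    ∧ ((∀ x t, deriv (fun s => χ x s) t + fderiv ℝ (fun y => χ y t) x (ubar x t) = 0) →
       (∀ x t, deriv (fun s => lam x s) t + fderiv ℝ (fun y => lam y t) x (ubar x t) = 0) →
       (∀ x t, deriv (fun s => Dbar x s) t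
          + ∑ i, fderiv ℝ (fun y => Dbar y t * ubar y t i) x (Pi.single i 1) = 0) →
       ∀ x t i,
         deriv (fun s => ξ x s i) t
           + fderiv ℝ (fun y => ξ y t i) x (ubar x t)
           - fderiv ℝ (fun y => ubar y t i) x (ξ x t) = 0) := by
  have hU : ∀ j : Fin 3, ContDiff ℝ (⊤:ℕ∞) ((fun p : Pt => ubar p.1 p.2 j)) := fun j => (contDiff_pi.1 hu) j
  have hH : ∀ p : Pt, (fun p : Pt => Dbar p.1 p.2) p ≠ 0 := fun p => ne_of_gt (hDpos p.1 p.2)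
  have hxi : ∀ (y : Fin 3 → ℝ) (s : ℝ) (i : Fin 3),
      ξ y s i = XiF (fun p : Pt => χ p.1 p.2) (fun p : Pt => lam p.1 p.2) (fun p : Pt => Dbar p.1 p.2) i (y, s) := by
    intro y s i
    rw [hξdef y s i]
    have hg1 : ∀ j, grad χ y s j = aF (fun p : Pt => χ p.1 p.2) j (y, s) := fun j =>
      slice_fderiv ((diff_of_smooth hχ) (y, s)) (Pi.single j 1)
    have hg2 : ∀ j, grad lam y s j = aF (fun p : Pt => lam p.1 p.2) j (y, s) := fun j =>
      slice_fderiv ((diff_of_smooth hlam) (y, s)) (Pi.single j 1)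
    show (grad χ y s (i+1) * grad lam y s (i+2)
        - grad χ y s (i+2) * grad lam y s (i+1)) / Dbar y s = _
    rw [hg1, hg1, hg2, hg2]
    rfl
  refine ⟨⟨?_, ?_⟩, ?_⟩
  · -- div(D̄ξ) = 0
    intro x t
    have hfun : ∀ i : Fin 3, (fun y => Dbar y t * ξ y t i)
        = fun y => WF (fun p : Pt => χ p.1 p.2) (fun p : Pt => lam p.1 p.2) i (y, t) := by
      intro i
      funext y
      rw [hxi y t i]
      show Dbar y t * (WF (fun p : Pt => χ p.1 p.2) (fun p : Pt => lam p.1 p.2) i (y, t) / Dbar y t) = _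
      rw [mul_comm, div_mul_cancel₀ _ (ne_of_gt (hDpos y t))]
    calc ∑ i, fderiv ℝ (fun y => Dbar y t * ξ y t i) x (Pi.single i 1)
        = ∑ i, fderiv ℝ (WF (fun p : Pt => χ p.1 p.2) (fun p : Pt => lam p.1 p.2) i) (x, t) (eS i) := by
          refine Finset.sum_congr rfl (fun i _ => ?_)
          rw [hfun i]
          exact slice_fderiv ((diff_of_smooth (smooth_WF hχ hlam i)) (x, t)) (Pi.single i 1)
      _ = 0 := div_free hχ hlam (x, t)
  · -- (ξ·∇)χ = 0
    intro x t
    have h1 : fderiv ℝ (fun y => χ y t) x (ξ x t) = fderiv ℝ (fun p : Pt => χ p.1 p.2) (x, t) (ξ x t, 0) :=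
      slice_fderiv ((diff_of_smooth hχ) (x, t)) (ξ x t)
    rw [h1, fderiv_decomp]
    calc ∑ i, ξ x t i * fderiv ℝ (fun p : Pt => χ p.1 p.2) (x, t) (eS i)
        = ∑ i, XiF (fun p : Pt => χ p.1 p.2) (fun p : Pt => lam p.1 p.2) (fun p : Pt => Dbar p.1 p.2) i (x, t) * fderiv ℝ (fun p : Pt => χ p.1 p.2) (x, t) (eS i) :=
          Finset.sum_congr rfl (fun i _ => by rw [hxi x t i])
      _ = 0 := ortho (x, t) (hH (x, t))
  · -- part (ii)
    intro hadvχ hadvl hcontD x t i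
    have hadv1 : ∀ q : Pt, fderiv ℝ (fun p : Pt => χ p.1 p.2) q eT + ∑ j, (fun p : Pt => ubar p.1 p.2 j) q * fderiv ℝ (fun p : Pt => χ p.1 p.2) q (eS j) = 0 := by
      rintro ⟨xq, tq⟩
      have h0 := hadvχ xq tq
      have h1 : deriv (fun s => χ xq s) tq = fderiv ℝ (fun p : Pt => χ p.1 p.2) (xq, tq) eT :=
        slice_deriv ((diff_of_smooth hχ) (xq, tq))
      have h2 : fderiv ℝ (fun y => χ y tq) xq (ubar xq tq)
          = fderiv ℝ (fun p : Pt => χ p.1 p.2) (xq, tq) (ubar xq tq, 0) :=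
        slice_fderiv ((diff_of_smooth hχ) (xq, tq)) (ubar xq tq)
      rw [h1, h2, fderiv_decomp] at h0
      exact h0
    have hadv2 : ∀ q : Pt, fderiv ℝ (fun p : Pt => lam p.1 p.2) q eT + ∑ j, (fun p : Pt => ubar p.1 p.2 j) q * fderiv ℝ (fun p : Pt => lam p.1 p.2) q (eS j) = 0 := by
      rintro ⟨xq, tq⟩
      have h0 := hadvl xq tq
      have h1 : deriv (fun s => lam xq s) tq = fderiv ℝ (fun p : Pt => lam p.1 p.2) (xq, tq) eT :=
        slice_deriv ((diff_of_smooth hlam) (xq, tq))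
      have h2 : fderiv ℝ (fun y => lam y tq) xq (ubar xq tq)
          = fderiv ℝ (fun p : Pt => lam p.1 p.2) (xq, tq) (ubar xq tq, 0) :=
        slice_fderiv ((diff_of_smooth hlam) (xq, tq)) (ubar xq tq)
      rw [h1, h2, fderiv_decomp] at h0
      exact h0
    have hcont : ∀ q : Pt, fderiv ℝ (fun p : Pt => Dbar p.1 p.2) q eT
        + ∑ j, ((fun p : Pt => Dbar p.1 p.2) q * fderiv ℝ ((fun p : Pt => ubar p.1 p.2 j)) q (eS j) + (fun p : Pt => ubar p.1 p.2 j) q * fderiv ℝ (fun p : Pt => Dbar p.1 p.2) q (eS j)) = 0 := by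
      rintro ⟨xq, tq⟩
      have h0 := hcontD xq tq
      have h1 : deriv (fun s => Dbar xq s) tq = fderiv ℝ (fun p : Pt => Dbar p.1 p.2) (xq, tq) eT :=
        slice_deriv ((diff_of_smooth hD) (xq, tq))
      have h2 : ∀ j : Fin 3, fderiv ℝ (fun y => Dbar y tq * ubar y tq j) xq (Pi.single j 1)
          = (fun p : Pt => Dbar p.1 p.2) (xq, tq) * fderiv ℝ ((fun p : Pt => ubar p.1 p.2 j)) (xq, tq) (eS j)
            + (fun p : Pt => ubar p.1 p.2 j) (xq, tq) * fderiv ℝ (fun p : Pt => Dbar p.1 p.2) (xq, tq) (eS j) := by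
        intro j
        have hs : fderiv ℝ (fun y => Dbar y tq * ubar y tq j) xq (Pi.single j 1)
            = fderiv ℝ (fun q : Pt => (fun p : Pt => Dbar p.1 p.2) q * (fun p : Pt => ubar p.1 p.2 j) q) (xq, tq) (eS j) :=
          slice_fderiv ((diff_of_smooth (hD.mul (hU j))) (xq, tq)) (Pi.single j 1)
        rw [hs]
        exact dv_mul ((diff_of_smooth hD) (xq, tq)) ((diff_of_smooth (hU j)) (xq, tq)) (eS j)
      rw [h1, Finset.sum_congr rfl (fun j _ => h2 j)] at h0
      exact h0
    have hg1 : deriv (fun s => ξ x s i) t = fderiv ℝ (XiF (fun p : Pt => χ p.1 p.2) (fun p : Pt => lam p.1 p.2) (fun p : Pt => Dbar p.1 p.2) i) (x, t) eT := by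
      have he : (fun s => ξ x s i) = fun s => XiF (fun p : Pt => χ p.1 p.2) (fun p : Pt => lam p.1 p.2) (fun p : Pt => Dbar p.1 p.2) i (x, s) := by
        funext s; exact hxi x s i
      rw [he]
      exact slice_deriv ((diff_of_smooth (smooth_XiF hχ hlam hD hH i)) (x, t))
    have hg2 : fderiv ℝ (fun y => ξ y t i) x (ubar x t)
        = ∑ j, (fun p : Pt => ubar p.1 p.2 j) (x, t) * fderiv ℝ (XiF (fun p : Pt => χ p.1 p.2) (fun p : Pt => lam p.1 p.2) (fun p : Pt => Dbar p.1 p.2) i) (x, t) (eS j) := by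
      have he : (fun y => ξ y t i) = fun y => XiF (fun p : Pt => χ p.1 p.2) (fun p : Pt => lam p.1 p.2) (fun p : Pt => Dbar p.1 p.2) i (y, t) := by
        funext y; exact hxi y t i
      rw [he, slice_fderiv ((diff_of_smooth (smooth_XiF hχ hlam hD hH i)) (x, t)) (ubar x t),
        fderiv_decomp]
    have hg3 : fderiv ℝ (fun y => ubar y t i) x (ξ x t)
        = ∑ j, XiF (fun p : Pt => χ p.1 p.2) (fun p : Pt => lam p.1 p.2) (fun p : Pt => Dbar p.1 p.2) j (x, t) * fderiv ℝ ((fun p : Pt => ubar p.1 p.2 i)) (x, t) (eS j) := by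
      rw [slice_fderiv ((diff_of_smooth (hU i)) (x, t)) (ξ x t), fderiv_decomp]
      exact Finset.sum_congr rfl (fun j _ => by rw [hxi x t j])
    rw [hg1, hg2, hg3]
    exact frozen hχ hlam hD hU hH hadv1 hadv2 hcont (x, t) i
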